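/- For every m ∈ ℕ and every real q, the odd-index partial generating polynomial of the Thue-Morse sequence factors as t_{2m+1} · (∑_{i=0}^{2m+1} t_i q^i) = (q − 1) · t_m · (∑_{i=0}^{m} t_i (q^2)^i). -/
import Mathlib


/-- The Thue-Morse sequence on the alphabet `{-1, 1}`:
`t 0 = -1`, `t (2i) = t i`, `t (2i+1) = -t (2i)`. -/
def thueMorse : ℕ → ℤ
  | 0 => -1
  | n + 1 =>
    have : (n + 1) / 2 < n + 1 := Nat.div_lt_self (Nat.succ_pos n) one_lt_two
    if (n + 1) % 2 = 0 then thueMorse ((n + 1) / 2) else -thueMorse ((n + 1) / 2)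

lemma thueMorse_two_mul (n : ℕ) : thueMorse (2 * n) = thueMorse n := by
  match n with
  | 0 => rfl
  | n + 1 =>
    have h : 2 * (n + 1) = (2 * n + 1) + 1 := by ring
    rw [h, thueMorse]
    have h1 : (2 * n + 1 + 1) % 2 = 0 := by omega
    have h2 : (2 * n + 1 + 1) / 2 = n + 1 := by omega
    simp [h1, h2]

lemma thueMorse_two_mul_add_one (n : ℕ) : thueMorse (2 * n + 1) = -thueMorse n := by
  rw [thueMorse]
  have h1 : (2 * n + 1) % 2 ≠ 0 := by omega
  have h2 : (2 * n + 1) / 2 = n := by omega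
  simp [h1, h2]

lemma thueMorse_sum_key (m : ℕ) (q : ℝ) :
    ∑ i ∈ Finset.range (2 * m + 2), (thueMorse i : ℝ) * q ^ i
      = (1 - q) * ∑ i ∈ Finset.range (m + 1), (thueMorse i : ℝ) * (q ^ 2) ^ i := by
  induction m with
  | zero =>
    simp [Finset.sum_range_succ, thueMorse]
    ring
  | succ m ih =>
    have h : 2 * (m + 1) + 2 = (2 * m + 2) + 1 + 1 := by ring
    rw [h, Finset.sum_range_succ, Finset.sum_range_succ, ih, Finset.sum_range_succ (n := m + 1)]
    have e1 : (2 * m + 2) = 2 * (m + 1) := by ring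
    have e2 : (2 * m + 2 + 1) = 2 * (m + 1) + 1 := by ring
    rw [e1, e2, thueMorse_two_mul, thueMorse_two_mul_add_one]
    push_cast
    ring

/-- For every `m` and real `q`, the odd-index partial generating
polynomial of the Thue-Morse sequence factors as
`t_{2m+1} · (∑_{i=0}^{2m+1} t_i q^i) = (q - 1) · t_m · (∑_{i=0}^m t_i (q²)^i)`. -/
theorem thueMorse_partial_sum_factorization (m : ℕ) (q : ℝ) :
    (thueMorse (2 * m + 1) : ℝ) * ∑ i ∈ Finset.range (2 * m + 2), (thueMorse i : ℝ) * q ^ i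
      = (q - 1) * ((thueMorse m : ℝ)
          * ∑ i ∈ Finset.range (m + 1), (thueMorse i : ℝ) * (q ^ 2) ^ i) := by
  rw [thueMorse_sum_key, thueMorse_two_mul_add_one]
  push_cast
  ring
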